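/- (Anthyphairesis of the diameter to the side of a square: Anth(a, b) = [1, period(2)] when a² = 2b².) Let a, b be real numbers with a > 0, b > 0 and a² = 2·b², and let e be the anthyphairesis remainder sequence of (a, b) (note b < a < 2b follows from the hypotheses). Then e n ≠ 0 for every n, ⌊e 0 / e 1⌋ = 1, and ⌊e k / e (k+1)⌋ = 2 for every k ≥ 1. -/

import Mathlib

/-- `e` is the anthyphairesis remainder sequence of the pair `(a, b)`:
`e 0 = a`, `e 1 = b`, and each new remainder is obtained by division with
remainder of `e n` by `e (n+1)` (stopping, i.e. giving `0`, once a remainder vanishes). -/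
def IsAnthSeq (a b : ℝ) (e : ℕ → ℝ) : Prop :=
  e 0 = a ∧ e 1 = b ∧
    ∀ n : ℕ,
      (e (n + 1) ≠ 0 → e (n + 2) = e n - (⌊e n / e (n + 1)⌋ : ℝ) * e (n + 1)) ∧
      (e (n + 1) = 0 → e (n + 2) = 0)

/-- The anthyphairesis of the diameter to the side of a square:
`Anth(a, b) = [1, period(2)]` when `a² = 2 b²`. -/
theorem anthyphairesis_sqrt2
    (a b : ℝ) (ha : 0 < a) (hb : 0 < b) (h2 : a ^ 2 = 2 * b ^ 2)
    (e : ℕ → ℝ) (he : IsAnthSeq a b e) :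
    (∀ n : ℕ, e n ≠ 0) ∧ ⌊e 0 / e 1⌋ = 1 ∧
    (∀ k : ℕ, 1 ≤ k → ⌊e k / e (k + 1)⌋ = 2) := by
  obtain ⟨h0, h1, hrec⟩ := he
  set s := Real.sqrt 2 with hs
  have hs2 : s ^ 2 = 2 := Real.sq_sqrt (by norm_num)
  have hs0 : 0 ≤ s := Real.sqrt_nonneg 2
  have hs1 : 1 < s := by nlinarith
  have hslt : s < 2 := by nlinarith
  have hab : a = s * b := by
    have hz : (a - s * b) * (a + s * b) = 0 := by nlinarith
    rcases mul_eq_zero.1 hz with h | h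
    · linarith
    · nlinarith
  have hsb : 0 < s - 1 := by linarith
  -- floor of s is 1
  have hfs : ⌊s⌋ = 1 := by
    rw [Int.floor_eq_iff]
    constructor <;> push_cast <;> linarith
  have hfs1 : ⌊s + 1⌋ = 2 := by
    rw [Int.floor_eq_iff]
    constructor <;> push_cast <;> linarith
  -- key invariant
  have key : ∀ n : ℕ, e (n + 1) = (s - 1) ^ n * b ∧ e (n + 2) = (s - 1) ^ (n + 1) * b := by
    intro n
    induction n with
    | zero =>
      refine ⟨by simpa using h1, ?_⟩
      have hb1 : e 1 ≠ 0 := by rw [h1]; exact ne_of_gt hb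
      have := (hrec 0).1 hb1
      rw [h0, h1, hab] at this
      rw [this]
      have hdiv : s * b / b = s := by field_simp
      rw [hdiv, hfs]
      push_cast
      ring
    | succ n ih =>
      obtain ⟨ih1, ih2⟩ := ih
      have hpos : 0 < (s - 1) ^ (n + 1) * b := by positivity
      refine ⟨ih2, ?_⟩
      have hne : e (n + 2) ≠ 0 := by rw [ih2]; exact ne_of_gt hpos
      have := (hrec (n + 1)).1 hne
      rw [ih1, ih2] at this
      have hdiv : (s - 1) ^ n * b / ((s - 1) ^ (n + 1) * b) = s + 1 := by
        rw [pow_succ]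
        field_simp
        linear_combination (-1 : ℝ) * hs2
      rw [hdiv, hfs1] at this
      rw [this, pow_succ, pow_succ]
      push_cast
      linear_combination (-(s - 1) ^ n * b) * hs2
  refine ⟨?_, ?_, ?_⟩
  · intro n
    cases n with
    | zero => rw [h0]; exact ne_of_gt ha
    | succ n =>
      rw [(key n).1]
      positivity
  · rw [h0, h1, hab]
    have hdiv : s * b / b = s := by field_simp
    rw [hdiv, hfs]
  · intro k hk
    obtain ⟨n, rfl⟩ := Nat.exists_eq_add_of_le' hk
    rw [(key n).1, (key n).2]
    have hdiv : (s - 1) ^ n * b / ((s - 1) ^ (n + 1) * b) = s + 1 := by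
      rw [pow_succ]
      field_simp
      linear_combination (-1 : ℝ) * hs2
    rw [hdiv, hfs1]
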